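/- Let q > 5 be real, and let W be a real-valued random variable with E W = 0, E W² > 0, and E|W|^{q} < ∞. For v ∈ (0,∞), define ψ_v(u) := E|v + uW|^{q-4} for u ≥ 0. Then ψ_v is strictly increasing on [0,∞). -/

import Mathlib

open MeasureTheory

private lemma rpow_le_one_add_rpow {p q x : ℝ} (hp : 0 ≤ p) (hpq : p ≤ q) :
    |x| ^ p ≤ 1 + |x| ^ q := by
  rcases le_total |x| 1 with h | h
  · have h1 : |x| ^ p ≤ 1 := Real.rpow_le_one (abs_nonneg x) h hp
    nlinarith [Real.rpow_nonneg (abs_nonneg x) q]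
  · have h1 : |x| ^ p ≤ |x| ^ q := Real.rpow_le_rpow_of_exponent_le h hpq
    nlinarith

private lemma add_rpow_le {p a b : ℝ} (hp : 0 ≤ p) (ha : 0 ≤ a) (hb : 0 ≤ b) :
    (a + b) ^ p ≤ 2 ^ p * (a ^ p + b ^ p) := by
  have h1 : a + b ≤ 2 * max a b := by
    rcases le_total a b with h | h
    · simp [max_eq_right h]; linarith
    · simp [max_eq_left h]; linarith
  have h2 : (a + b) ^ p ≤ (2 * max a b) ^ p :=
    Real.rpow_le_rpow (by linarith) h1 hp
  have h3 : (2 * max a b) ^ p = 2 ^ p * (max a b) ^ p :=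
    Real.mul_rpow (by norm_num) (le_max_iff.mpr (Or.inl ha))
  have h4 : (max a b) ^ p ≤ a ^ p + b ^ p := by
    rcases le_total a b with h | h
    · rw [max_eq_right h]
      nlinarith [Real.rpow_nonneg ha p]
    · rw [max_eq_left h]
      nlinarith [Real.rpow_nonneg hb p]
  calc (a + b) ^ p ≤ 2 ^ p * (max a b) ^ p := by rw [← h3]; exact h2
    _ ≤ 2 ^ p * (a ^ p + b ^ p) := by
        have : (0:ℝ) ≤ 2 ^ p := Real.rpow_nonneg (by norm_num) p
        nlinarith

theorem stmt4 {Ω : Type*} [MeasurableSpace Ω] (μ : Measure Ω) [IsProbabilityMeasure μ]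
    (W : Ω → ℝ) (hW : Measurable W) (q v : ℝ) (hq : 5 < q) (hv : 0 < v)
    (hint : Integrable (fun ω => |W ω| ^ q) μ)
    (hmean : ∫ ω, W ω ∂μ = 0)
    (hvar : 0 < ∫ ω, (W ω) ^ 2 ∂μ) :
    StrictMonoOn (fun u : ℝ => ∫ ω, |v + u * W ω| ^ (q - 4) ∂μ) (Set.Ici 0) := by
  set p : ℝ := q - 4 with hp_def
  have hp1 : 1 < p := by simp only [hp_def]; linarith
  have hp0 : 0 < p := by linarith
  -- W is integrable
  have hWq_int : Integrable (fun ω => 1 + |W ω| ^ q) μ := (integrable_const 1).add hint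
  have hWint : Integrable W μ := by
    refine hWq_int.mono' hW.aestronglyMeasurable ?_
    filter_upwards with ω
    have := rpow_le_one_add_rpow (x := W ω) (zero_le_one) (by linarith : (1:ℝ) ≤ q)
    rw [Real.rpow_one] at this
    simpa [Real.norm_eq_abs] using this
  have hcont : Continuous (fun x : ℝ => x ^ p) := Real.continuous_rpow_const hp0.le
  -- integrability of the integrand for each u
  have hIint : ∀ u : ℝ, Integrable (fun ω => |v + u * W ω| ^ p) μ := by
    intro u
    have hmeas : Measurable fun ω => |v + u * W ω| ^ p :=
      hcont.measurable.comp (measurable_const.add (measurable_const.mul hW)).abs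
    refine (((integrable_const ((2:ℝ) ^ p * |v| ^ p)).add
      ((hWq_int.const_mul (2 ^ p * |u| ^ p)))).mono' hmeas.aestronglyMeasurable ?_)
    filter_upwards with ω
    have h0 : |v + u * W ω| ≤ |v| + |u| * |W ω| := by
      calc |v + u * W ω| ≤ |v| + |u * W ω| := abs_add_le _ _
        _ = |v| + |u| * |W ω| := by rw [abs_mul]
    have h1 : |v + u * W ω| ^ p ≤ (|v| + |u| * |W ω|) ^ p :=
      Real.rpow_le_rpow (abs_nonneg _) h0 hp0.le
    have h2 : (|v| + |u| * |W ω|) ^ p ≤ 2 ^ p * (|v| ^ p + (|u| * |W ω|) ^ p) :=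
      add_rpow_le hp0.le (abs_nonneg _) (mul_nonneg (abs_nonneg _) (abs_nonneg _))
    have h3 : (|u| * |W ω|) ^ p = |u| ^ p * |W ω| ^ p :=
      Real.mul_rpow (abs_nonneg _) (abs_nonneg _)
    have h4 : |W ω| ^ p ≤ 1 + |W ω| ^ q := rpow_le_one_add_rpow hp0.le (by linarith)
    have h5 : (0:ℝ) ≤ |u| ^ p := Real.rpow_nonneg (abs_nonneg _) p
    have h6 : (0:ℝ) ≤ 2 ^ p := Real.rpow_nonneg (by norm_num) p
    have h7 := mul_le_mul_of_nonneg_left h4 (mul_nonneg h6 h5)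
    have : |v + u * W ω| ^ p ≤ 2 ^ p * |v| ^ p + 2 ^ p * |u| ^ p * (1 + |W ω| ^ q) := by
      nlinarith
    calc ‖|v + u * W ω| ^ p‖ = |v + u * W ω| ^ p := by
          rw [Real.norm_eq_abs, abs_of_nonneg (Real.rpow_nonneg (abs_nonneg _) p)]
      _ ≤ 2 ^ p * |v| ^ p + 2 ^ p * |u| ^ p * (1 + |W ω| ^ q) := this
  -- W is not a.e. zero
  have hWne : ¬ (W =ᵐ[μ] (fun _ => (0:ℝ))) := by
    intro h
    have h2 : (fun ω => (W ω) ^ 2) =ᵐ[μ] (fun _ => (0:ℝ)) :=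
      h.mono fun ω hω => by simp only at hω; simp [hω]
    have : ∫ ω, (W ω) ^ 2 ∂μ = 0 := by
      rw [integral_congr_ae h2]; simp
    linarith
  -- key strict inequality: for u > 0, v^p < ∫ |v + uW|^p
  have key : ∀ u : ℝ, 0 < u → v ^ p < ∫ ω, |v + u * W ω| ^ p ∂μ := by
    intro u hu
    have hXint : Integrable (fun ω => v + u * W ω) μ :=
      (integrable_const v).add (hWint.const_mul u)
    have hfint : Integrable (fun ω => |v + u * W ω|) μ := hXint.abs
    have hEX : ∫ ω, (v + u * W ω) ∂μ = v := by
      rw [integral_add (integrable_const v) (hWint.const_mul u), integral_const,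
        integral_const_mul, hmean]
      simp
    have hvle : v ≤ ∫ ω, |v + u * W ω| ∂μ := by
      calc v = ∫ ω, (v + u * W ω) ∂μ := hEX.symm
        _ ≤ ‖∫ ω, (v + u * W ω) ∂μ‖ := Real.le_norm_self _
        _ ≤ ∫ ω, ‖v + u * W ω‖ ∂μ := norm_integral_le_integral_norm _
        _ = ∫ ω, |v + u * W ω| ∂μ := by simp [Real.norm_eq_abs]
    have hsj := (strictConvexOn_rpow hp1).ae_eq_const_or_map_average_lt
      hcont.continuousOn isClosed_Ici
      (Filter.Eventually.of_forall fun ω => Set.mem_Ici.mpr (abs_nonneg _))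
      hfint (by exact hIint u)
    rw [average_eq_integral, average_eq_integral] at hsj
    rcases hsj with hconst | hlt
    · -- |v + uW| =ᵐ c where c = ∫ |v+uW|
      set c : ℝ := ∫ ω, |v + u * W ω| ∂μ with hc_def
      have hvc : v < c := by
        rcases lt_or_eq_of_le hvle with h | h
        · exact h
        · exfalso
          -- v = c : then ∫ (|X| - X) = 0 with nonneg integrand ⇒ X =ᵐ |X| = c = v ⇒ W = 0 a.e.
          have hzero : ∫ ω, (|v + u * W ω| - (v + u * W ω)) ∂μ = 0 := by
            rw [integral_sub hfint hXint, hEX, ← hc_def, ← h, sub_self]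
          have hnn : 0 ≤ᵐ[μ] fun ω => |v + u * W ω| - (v + u * W ω) :=
            Filter.Eventually.of_forall fun ω => sub_nonneg.mpr (le_abs_self _)
          have heq : (fun ω => |v + u * W ω| - (v + u * W ω)) =ᵐ[μ] 0 :=
            (integral_eq_zero_iff_of_nonneg_ae hnn (hfint.sub hXint)).mp hzero
          apply hWne
          filter_upwards [heq, hconst] with ω h1 h2
          have hax : |v + u * W ω| = v + u * W ω := by
            have : |v + u * W ω| - (v + u * W ω) = 0 := h1
            linarith [this]
          have : v + u * W ω = c := by rw [← hax]; exact h2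
          have : u * W ω = 0 := by rw [← h] at this; linarith
          exact (mul_eq_zero.mp this).resolve_left (ne_of_gt hu)
      have hconst2 : (fun ω => |v + u * W ω| ^ p) =ᵐ[μ] (fun _ => c ^ p) :=
        hconst.mono fun ω hω => by simp only [Function.const] at hω ⊢; rw [hω]
      have : ∫ ω, |v + u * W ω| ^ p ∂μ = c ^ p := by
        rw [integral_congr_ae hconst2]; simp
      rw [this]
      exact Real.rpow_lt_rpow hv.le hvc hp0
    · calc v ^ p ≤ (∫ ω, |v + u * W ω| ∂μ) ^ p :=
            Real.rpow_le_rpow hv.le hvle hp0.le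
        _ < ∫ ω, |v + u * W ω| ^ p ∂μ := hlt
  -- main argument
  intro u₁ hu₁ u₂ hu₂ h12
  simp only [Set.mem_Ici] at hu₁ hu₂
  rcases eq_or_lt_of_le hu₁ with h0 | h0
  · -- u₁ = 0
    have hψ0 : ∫ ω, |v + u₁ * W ω| ^ p ∂μ = v ^ p := by
      rw [← h0]
      simp [abs_of_pos hv]
    simpa only [hψ0] using key u₂ (h0 ▸ h12)
  · -- 0 < u₁ < u₂
    set t : ℝ := u₁ / u₂ with ht_def
    have hu₂0 : 0 < u₂ := lt_trans h0 h12
    have ht0 : 0 < t := div_pos h0 hu₂0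
    have ht1 : t < 1 := (div_lt_one hu₂0).mpr h12
    have hconv := convexOn_rpow hp1.le
    have hptw : ∀ ω, |v + u₁ * W ω| ^ p ≤ t * |v + u₂ * W ω| ^ p + (1 - t) * v ^ p := by
      intro ω
      have hcomb : v + u₁ * W ω = t * (v + u₂ * W ω) + (1 - t) * v := by
        have htu : t * u₂ = u₁ := by rw [ht_def]; exact div_mul_cancel₀ u₁ hu₂0.ne'
        linear_combination (-(W ω)) * htu
      have habs : |v + u₁ * W ω| ≤ t * |v + u₂ * W ω| + (1 - t) * v := by
        rw [hcomb]
        calc |t * (v + u₂ * W ω) + (1 - t) * v| ≤ |t * (v + u₂ * W ω)| + |(1 - t) * v| :=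
              abs_add_le _ _
          _ = t * |v + u₂ * W ω| + (1 - t) * v := by
              rw [abs_mul, abs_mul, abs_of_pos ht0, abs_of_pos (by linarith : (0:ℝ) < 1 - t),
                abs_of_pos hv]
      have h1 : |v + u₁ * W ω| ^ p ≤ (t * |v + u₂ * W ω| + (1 - t) * v) ^ p :=
        Real.rpow_le_rpow (abs_nonneg _) habs hp0.le
      have h2 := hconv.2 (Set.mem_Ici.mpr (abs_nonneg (v + u₂ * W ω)))
        (Set.mem_Ici.mpr hv.le) ht0.le (by linarith : (0:ℝ) ≤ 1 - t) (by ring)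
      simp only [smul_eq_mul] at h2
      exact h1.trans h2
    have hle : ∫ ω, |v + u₁ * W ω| ^ p ∂μ
        ≤ t * (∫ ω, |v + u₂ * W ω| ^ p ∂μ) + (1 - t) * v ^ p := by
      have hrhs : Integrable (fun ω => t * |v + u₂ * W ω| ^ p + (1 - t) * v ^ p) μ :=
        ((hIint u₂).const_mul t).add (integrable_const _)
      calc ∫ ω, |v + u₁ * W ω| ^ p ∂μ
          ≤ ∫ ω, (t * |v + u₂ * W ω| ^ p + (1 - t) * v ^ p) ∂μ :=
            integral_mono (hIint u₁) hrhs hptw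
        _ = t * (∫ ω, |v + u₂ * W ω| ^ p ∂μ) + (1 - t) * v ^ p := by
            rw [integral_add ((hIint u₂).const_mul t) (integrable_const _),
              integral_const_mul, integral_const]
            simp
    have hkey := key u₂ hu₂0
    calc ∫ ω, |v + u₁ * W ω| ^ p ∂μ
        ≤ t * (∫ ω, |v + u₂ * W ω| ^ p ∂μ) + (1 - t) * v ^ p := hle
      _ < t * (∫ ω, |v + u₂ * W ω| ^ p ∂μ) + (1 - t) * (∫ ω, |v + u₂ * W ω| ^ p ∂μ) := by
          have h1t : (0:ℝ) < 1 - t := by linarith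
          nlinarith
      _ = ∫ ω, |v + u₂ * W ω| ^ p ∂μ := by ring
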